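/- Let G = (V,E) be a connected n-vertex graph and suppose ξ: V → ℝ is a unit ℓ²-norm eigenvector of the graph Laplacian L(G) with eigenvalue κ = O(n^{−b}) for some b > 0. Then ‖ξ‖₁ = Ω(n^a) for some a > 0 depending only on b. -/

import Mathlib

open Finset

section Aux
open SimpleGraph
set_option linter.unusedSectionVars false

variable {V : Type*} [Fintype V] [DecidableEq V] {G : SimpleGraph V} [DecidableRel G.Adj]



lemma walk_telescope (ξ : V → ℝ) {u v : V} (p : G.Walk u v) :
    ((p.darts.map fun d => ξ d.toProd.1 - ξ d.toProd.2).sum) = ξ u - ξ v := by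
  induction p with
  | nil => simp
  | cons h q ih => simp only [SimpleGraph.Walk.darts_cons, List.map_cons, List.sum_cons, ih]; ring

lemma list_cauchy (l : List ℝ) : l.sum ^ 2 ≤ l.length * (l.map (· ^ 2)).sum := by
  induction l with
  | nil => simp
  | cons a t ih =>
    simp only [List.sum_cons, List.length_cons, List.map_cons]
    push_cast
    have ht : (0:ℝ) ≤ (t.map (· ^ 2)).sum := by
      apply List.sum_nonneg; intro x hx
      simp only [List.mem_map] at hx; obtain ⟨y, _, rfl⟩ := hx; positivity
    by_cases h0 : t.length = 0
    · have : t = [] := List.length_eq_zero_iff.mp h0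
      subst this; simp
    · have hk1 : (1:ℝ) ≤ t.length := by exact_mod_cast Nat.one_le_iff_ne_zero.mpr h0
      nlinarith [ih, ht, hk1, sq_nonneg ((t.length:ℝ)*a - t.sum)]

lemma exists_walk_getVert_le {u v : V} (p : G.Walk u v) (k : ℕ) :
    ∃ q : G.Walk u (p.getVert k), q.length ≤ k := by
  induction p generalizing k with
  | nil => exact ⟨SimpleGraph.Walk.nil.copy rfl (by simp [SimpleGraph.Walk.getVert]), by simp⟩
  | @cons a b c h q ih =>
    cases k with
    | zero => exact ⟨SimpleGraph.Walk.nil.copy rfl (by simp), by simp⟩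
    | succ k =>
      obtain ⟨q', hq'⟩ := ih k
      exact ⟨(SimpleGraph.Walk.cons h q').copy rfl (by rw [SimpleGraph.Walk.getVert_cons_succ]),
        by simpa using Nat.succ_le_succ hq'⟩

lemma exists_walk_getVert_suffix {u v : V} (p : G.Walk u v) (k : ℕ) :
    ∃ q : G.Walk (p.getVert k) v, q.length ≤ p.length - k := by
  induction p generalizing k with
  | nil => exact ⟨SimpleGraph.Walk.nil.copy (by simp [SimpleGraph.Walk.getVert]) rfl, by simp⟩
  | @cons a b c h q ih =>
    cases k with
    | zero =>
      exact ⟨(SimpleGraph.Walk.cons h q).copy (by simp) rfl, by simp⟩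
    | succ k =>
      obtain ⟨q', hq'⟩ := ih k
      refine ⟨q'.copy (by rw [SimpleGraph.Walk.getVert_cons_succ]) rfl, ?_⟩
      simp only [SimpleGraph.Walk.length_copy, SimpleGraph.Walk.length_cons]
      omega




lemma my_exists_dist_eq (hG : G.Connected) (u w : V) {k : ℕ} (hk : k ≤ G.dist u w) :
    ∃ x : V, G.dist u x = k := by
  obtain ⟨p, hp⟩ := hG.exists_walk_length_eq_dist u w
  refine ⟨p.getVert k, le_antisymm ?_ ?_⟩
  · obtain ⟨q, hq⟩ := exists_walk_getVert_le p k
    exact (SimpleGraph.dist_le q).trans hq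
  · by_contra hlt
    push_neg at hlt
    obtain ⟨q1, hq1⟩ := hG.exists_walk_length_eq_dist u (p.getVert k)
    obtain ⟨q2, hq2⟩ := exists_walk_getVert_suffix p k
    have := SimpleGraph.dist_le (q1.append q2)
    rw [SimpleGraph.Walk.length_append] at this
    omega

lemma ball_growth (hG : G.Connected) (u : V) (d : ℕ)
    (hne : (univ.filter fun v => G.dist u v ≤ d) ≠ univ) :
    d + 1 ≤ (univ.filter fun v => G.dist u v ≤ d).card := by
  induction d with
  | zero =>
    have hu : u ∈ univ.filter fun v => G.dist u v ≤ 0 := by simp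
    exact Finset.card_pos.mpr ⟨u, hu⟩
  | succ d ih =>
    have hsub : (univ.filter fun v => G.dist u v ≤ d) ⊆
        (univ.filter fun v => G.dist u v ≤ d + 1) := by
      intro v hv; simp only [Finset.mem_filter, Finset.mem_univ, true_and] at hv ⊢; omega
    have hne' : (univ.filter fun v => G.dist u v ≤ d) ≠ univ := by
      intro h
      apply hne
      apply Finset.eq_univ_iff_forall.mpr
      intro v
      have := (Finset.eq_univ_iff_forall.mp h) v
      simp only [Finset.mem_filter, Finset.mem_univ, true_and] at this ⊢
      omega
    obtain ⟨w, hw⟩ : ∃ w, ¬ (G.dist u w ≤ d + 1) := by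
      by_contra hc; push_neg at hc
      exact hne (Finset.eq_univ_of_forall fun v => by simpa using hc v)
    obtain ⟨x, hx⟩ := my_exists_dist_eq hG u w (k := d + 1) (by omega)
    have hss : (univ.filter fun v => G.dist u v ≤ d) ⊂
        (univ.filter fun v => G.dist u v ≤ d + 1) := by
      refine ⟨hsub, fun hrev => ?_⟩
      have := hrev (by simp [hx] : x ∈ univ.filter fun v => G.dist u v ≤ d + 1)
      simp [hx] at this
    have := Finset.card_lt_card hss
    have := ih hne'
    omega



lemma dart_sum_eq (f : V × V → ℝ) :
    ∑ d : G.Dart, f d.toProd = ∑ i : V, ∑ j : V, if G.Adj i j then f (i, j) else 0 := by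
  have h1 : ∑ d : G.Dart, f d.toProd
      = ∑ p ∈ univ.filter (fun p : V × V => G.Adj p.1 p.2), f p := by
    apply Finset.sum_bij (fun d _ => d.toProd)
    · intro d _; simp [d.adj]
    · intro d₁ _ d₂ _ h; exact SimpleGraph.Dart.toProd_injective h
    · intro p hp
      simp only [Finset.mem_filter, Finset.mem_univ, true_and] at hp
      exact ⟨⟨p, hp⟩, Finset.mem_univ _, rfl⟩
    · intro d _; rfl
  rw [h1, Finset.sum_filter, Fintype.sum_prod_type]

lemma quad_eq (ξ : V → ℝ) (κ : ℝ) (heig : (G.lapMatrix ℝ).mulVec ξ = κ • ξ)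
    (hnorm : ∑ v, ξ v ^ 2 = 1) :
    ∑ d : G.Dart, (ξ d.toProd.1 - ξ d.toProd.2) ^ 2 = 2 * κ := by
  have h1 : Matrix.toLinearMap₂' ℝ (G.lapMatrix ℝ) ξ ξ = κ := by
    rw [Matrix.toLinearMap₂'_apply', heig, dotProduct_smul]
    have : dotProduct ξ ξ = ∑ v, ξ v ^ 2 := by
      simp [dotProduct, pow_two]
    simp [this, hnorm]
  have h2 := SimpleGraph.lapMatrix_toLinearMap₂' (R := ℝ) G ξ
  rw [h1] at h2
  rw [dart_sum_eq (fun p => (ξ p.1 - ξ p.2) ^ 2)]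
  field_simp at h2 ⊢
  linarith [h2]

lemma trail_sum_le (ξ : V → ℝ) {u v : V} (p : G.Walk u v) (hp : p.IsTrail) :
    ((p.darts.map fun d => (ξ d.toProd.1 - ξ d.toProd.2) ^ 2).sum)
      ≤ ∑ d : G.Dart, (ξ d.toProd.1 - ξ d.toProd.2) ^ 2 := by
  have hnd : p.darts.Nodup := by
    have := hp.edges_nodup
    rw [SimpleGraph.Walk.edges] at this
    exact this.of_map _
  rw [← List.sum_toFinset _ hnd]
  apply Finset.sum_le_sum_of_subset_of_nonneg (Finset.subset_univ _)
  intro d _ _; positivity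

lemma sum_eq_zero_of_eig (ξ : V → ℝ) (κ : ℝ) (heig : (G.lapMatrix ℝ).mulVec ξ = κ • ξ)
    (hκ : κ ≠ 0) : ∑ v, ξ v = 0 := by
  have h0 : ∑ v, ((G.lapMatrix ℝ).mulVec ξ) v = 0 := by
    have hcol : ∀ v : V, ∑ u : V, G.lapMatrix ℝ u v = 0 := by
      intro v
      have := congrFun (SimpleGraph.lapMatrix_mulVec_const_eq_zero (R := ℝ) G) v
      simp only [Matrix.mulVec, dotProduct, mul_one, Pi.zero_apply] at this
      rw [← this]
      apply Finset.sum_congr rfl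
      intro u _
      exact Matrix.IsSymm.apply (SimpleGraph.isSymm_lapMatrix (R := ℝ) G) v u
    simp only [Matrix.mulVec, dotProduct]
    rw [Finset.sum_comm]
    simp_rw [← Finset.sum_mul]
    simp [hcol]
  rw [heig] at h0
  simp only [Pi.smul_apply, smul_eq_mul, ← Finset.mul_sum] at h0
  exact (mul_eq_zero.mp h0).resolve_left hκ




lemma pair_bound (hG : G.Connected) (ξ : V → ℝ) {κ : ℝ}
    (hE2 : ∑ d : G.Dart, (ξ d.toProd.1 - ξ d.toProd.2) ^ 2 = 2 * κ) (u v : V) :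
    (ξ u - ξ v) ^ 2 ≤ (G.dist u v) * (2 * κ) := by
  obtain ⟨p, hp, hlen⟩ := hG.exists_path_of_dist u v
  have h1 := walk_telescope ξ p
  have h2 := list_cauchy (p.darts.map fun d => ξ d.toProd.1 - ξ d.toProd.2)
  rw [h1, List.length_map, SimpleGraph.Walk.length_darts, List.map_map] at h2
  have h3 : ((p.darts.map ((· ^ 2) ∘ fun d => ξ d.toProd.1 - ξ d.toProd.2)).sum) ≤ 2 * κ := by
    have := trail_sum_le ξ p hp.isTrail
    rw [hE2] at this
    convert this using 2
    rfl
  calc (ξ u - ξ v) ^ 2 ≤ (p.length : ℝ) * (p.darts.map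
        ((· ^ 2) ∘ fun d => ξ d.toProd.1 - ξ d.toProd.2)).sum := h2
    _ ≤ (p.length : ℝ) * (2 * κ) := by
        apply mul_le_mul_of_nonneg_left h3 (by positivity)
    _ = (G.dist u v) * (2 * κ) := by rw [hlen]




lemma key_pos (hG : G.Connected) (κ : ℝ) (ξ : V → ℝ)
    (heig : (G.lapMatrix ℝ).mulVec ξ = κ • ξ) (hnorm : ∑ v, ξ v ^ 2 = 1)
    (hE2 : ∑ d : G.Dart, (ξ d.toProd.1 - ξ d.toProd.2) ^ 2 = 2 * κ)
    (u : V) (hmax : ∀ v, |ξ v| ≤ |ξ u|) (hu : 0 ≤ ξ u) (hκ : 0 < κ) :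
    (16 * κ) ^ (-(1/4 : ℝ)) ≤ ∑ v, |ξ v| := by
  set M : ℝ := ξ u with hM
  set S : ℝ := ∑ v, |ξ v| with hS
  have hMabs : |ξ u| = M := abs_of_nonneg hu
  have h1S : 1 ≤ M * S := by
    calc (1:ℝ) = ∑ v, ξ v ^ 2 := hnorm.symm
      _ ≤ ∑ v, M * |ξ v| := by
          apply Finset.sum_le_sum
          intro v _
          calc ξ v ^ 2 = |ξ v| * |ξ v| := by rw [← sq_abs, pow_two]
            _ ≤ M * |ξ v| := by
                apply mul_le_mul_of_nonneg_right _ (abs_nonneg _)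
                rw [← hMabs]; exact hmax v
      _ = M * S := by rw [hS, Finset.mul_sum]
  have hS0 : 0 ≤ S := Finset.sum_nonneg fun v _ => abs_nonneg _
  have hM0 : 0 < M := by
    rcases lt_or_ge 0 M with h | h
    · exact h
    · nlinarith
  have hSpos : 0 < S := by nlinarith
  have hsum0 : ∑ v, ξ v = 0 := sum_eq_zero_of_eig ξ κ heig hκ.ne'
  set d : ℕ := ⌊M ^ 2 / (8 * κ)⌋₊ with hd
  have hdle : (d : ℝ) ≤ M ^ 2 / (8 * κ) := Nat.floor_le (by positivity)
  have hdlt : M ^ 2 / (8 * κ) < d + 1 := Nat.lt_floor_add_one _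
  have hball : ∀ v : V, G.dist u v ≤ d → M / 2 ≤ ξ v := by
    intro v hv
    have h2 := pair_bound hG ξ hE2 u v
    have h3 : (ξ u - ξ v) ^ 2 ≤ M ^ 2 / 4 := by
      calc (ξ u - ξ v) ^ 2 ≤ (G.dist u v : ℝ) * (2 * κ) := h2
        _ ≤ (d : ℝ) * (2 * κ) := by
            apply mul_le_mul_of_nonneg_right _ (by positivity)
            exact_mod_cast hv
        _ ≤ (M ^ 2 / (8 * κ)) * (2 * κ) := by
            apply mul_le_mul_of_nonneg_right hdle (by positivity)
        _ = M ^ 2 / 4 := by field_simp; ring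
    nlinarith [sq_nonneg (M / 2 - ξ v)]
  rcases eq_or_ne (univ.filter fun v => G.dist u v ≤ d) univ with hcase | hcase
  · exfalso
    have hall : ∀ v : V, M / 2 ≤ ξ v := by
      intro v
      apply hball
      have := Finset.eq_univ_iff_forall.mp hcase v
      simpa using this
    have : (Fintype.card V : ℝ) * (M / 2) ≤ ∑ v, ξ v := by
      calc (Fintype.card V : ℝ) * (M / 2) = ∑ _v : V, (M / 2) := by
            rw [Finset.sum_const, Finset.card_univ, nsmul_eq_mul]
        _ ≤ ∑ v, ξ v := Finset.sum_le_sum fun v _ => hall v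
    have hcard1 : 1 ≤ (Fintype.card V : ℝ) := by
      have : 0 < Fintype.card V := Fintype.card_pos_iff.mpr ⟨u⟩
      exact_mod_cast this
    nlinarith
  · have hcard := ball_growth hG u d hcase
    have hSlow : M ^ 3 / (16 * κ) ≤ S := by
      have h4 : M ^ 2 / (8 * κ) * (M / 2) ≤ ((d : ℝ) + 1) * (M / 2) := by
        apply mul_le_mul_of_nonneg_right hdlt.le (by positivity)
      have h5 : ((d : ℝ) + 1) * (M / 2) ≤ ((univ.filter fun v => G.dist u v ≤ d).card : ℝ) * (M / 2) := by
        apply mul_le_mul_of_nonneg_right _ (by positivity)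
        exact_mod_cast hcard
      have h6 : ((univ.filter fun v => G.dist u v ≤ d).card : ℝ) * (M / 2) ≤ S := by
        calc ((univ.filter fun v => G.dist u v ≤ d).card : ℝ) * (M / 2)
            = ∑ _v ∈ (univ.filter fun v => G.dist u v ≤ d), (M / 2) := by
              rw [Finset.sum_const, nsmul_eq_mul]
          _ ≤ ∑ v ∈ (univ.filter fun v => G.dist u v ≤ d), |ξ v| := by
              apply Finset.sum_le_sum
              intro v hv
              simp only [Finset.mem_filter, Finset.mem_univ, true_and] at hv
              exact (hball v hv).trans (le_abs_self _)
          _ ≤ S := by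
              apply Finset.sum_le_sum_of_subset_of_nonneg (Finset.subset_univ _)
              intro v _ _; exact abs_nonneg _
      have : M ^ 2 / (8 * κ) * (M / 2) = M ^ 3 / (16 * κ) := by field_simp; ring
      linarith
    set t : ℝ := (16 * κ) ^ ((1/4 : ℝ)) with htdef
    have ht0 : 0 < t := Real.rpow_pos_of_pos (by positivity) _
    have ht4 : t ^ (4 : ℕ) = 16 * κ := by
      rw [htdef, ← Real.rpow_natCast ((16 * κ) ^ ((1/4:ℝ))) 4, ← Real.rpow_mul (by positivity)]
      norm_num
    have hgoal : (16 * κ) ^ (-(1/4 : ℝ)) = 1 / t := by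
      rw [Real.rpow_neg (by positivity), htdef, one_div]
      norm_num
    rw [hgoal]
    rcases le_or_gt M t with hMt | hMt
    · have : 1 / t ≤ 1 / M := one_div_le_one_div_of_le hM0 hMt
      have : 1 / M ≤ S := by rw [div_le_iff₀ hM0]; linarith [h1S]
      linarith [one_div_le_one_div_of_le hM0 hMt]
    · have h7 : t ^ 3 ≤ M ^ 3 := pow_le_pow_left₀ ht0.le hMt.le 3
      have h8 : 1 / t = t ^ 3 / (16 * κ) := by
        rw [← ht4]; field_simp
      rw [h8]
      calc t ^ 3 / (16 * κ) ≤ M ^ 3 / (16 * κ) := by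
            apply div_le_div_of_nonneg_right h7 (by positivity) |>.trans_eq rfl
        _ ≤ S := hSlow

end Aux

set_option maxHeartbeats 800000 in



/-- If ξ is a unit eigenvector of the Laplacian of a connected n-vertex graph with
eigenvalue κ = O(n^{−b}), b > 0, then ‖ξ‖₁ = Ω(n^a) for some a > 0 depending only on b. -/
theorem stmt5 :
    ∀ b : ℝ, 0 < b → ∀ Cb : ℝ, 0 < Cb →
    ∃ a c : ℝ, 0 < a ∧ 0 < c ∧ ∃ N : ℕ, ∀ n : ℕ, N ≤ n →
    ∀ (G : SimpleGraph (Fin n)) (_ : DecidableRel G.Adj), G.Connected →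
    ∀ (κ : ℝ) (ξ : Fin n → ℝ),
      (G.lapMatrix ℝ).mulVec ξ = κ • ξ →
      (∑ v, ξ v ^ 2 = 1) →
      κ ≤ Cb * (n : ℝ) ^ (-b) →
      c * (n : ℝ) ^ a ≤ ∑ v, |ξ v| := by
  intro b hb Cb hCb
  refine ⟨min (b/4) (1/2), min ((16*Cb) ^ (-(1/4:ℝ))) 1,
    lt_min (by linarith) (by norm_num),
    lt_min (Real.rpow_pos_of_pos (by positivity) _) one_pos, 1, ?_⟩
  intro n hn G _inst hG κ ξ heig hnorm hκle
  have hnR : (1:ℝ) ≤ n := by exact_mod_cast hn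
  have hnpos : (0:ℝ) < n := by linarith
  haveI : Nonempty (Fin n) := ⟨⟨0, hn⟩⟩
  have hE2 := quad_eq ξ κ heig hnorm
  have hκ0 : 0 ≤ κ := by
    have h : 0 ≤ ∑ d : G.Dart, (ξ d.toProd.1 - ξ d.toProd.2) ^ 2 :=
      Finset.sum_nonneg fun d _ => sq_nonneg _
    rw [hE2] at h; linarith
  obtain ⟨u, -, hmax⟩ := Finset.exists_max_image (univ : Finset (Fin n)) (fun v => |ξ v|)
    ⟨Classical.arbitrary _, Finset.mem_univ _⟩
  have hmax' : ∀ v, |ξ v| ≤ |ξ u| := fun v => hmax v (Finset.mem_univ v)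
  rcases eq_or_lt_of_le hκ0 with hκz | hκpos
  · -- κ = 0 : ξ is constant
    have hconst : ∀ v, ξ v = ξ u := by
      intro v
      have h := pair_bound hG ξ hE2 u v
      rw [← hκz] at h
      simp only [mul_zero] at h
      have : ξ u - ξ v = 0 := by nlinarith [sq_nonneg (ξ u - ξ v)]
      linarith
    have h2 : (n:ℝ) * (ξ u) ^ 2 = 1 := by
      rw [← hnorm]
      rw [Finset.sum_congr rfl fun v _ => by rw [hconst v]]
      rw [Finset.sum_const, Finset.card_univ, Fintype.card_fin, nsmul_eq_mul]
    have hSeq : ∑ v, |ξ v| = (n:ℝ) * |ξ u| := by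
      rw [Finset.sum_congr rfl fun v _ => by rw [hconst v]]
      rw [Finset.sum_const, Finset.card_univ, Fintype.card_fin, nsmul_eq_mul]
    rw [hSeq]
    have hs : Real.sqrt n = (n:ℝ) * |ξ u| := by
      rw [show (n:ℝ) * |ξ u| = Real.sqrt (((n:ℝ) * |ξ u|) ^ 2) from
        (Real.sqrt_sq (by positivity)).symm]
      congr 1
      rw [mul_pow, sq_abs]
      nlinarith
    rw [← hs, Real.sqrt_eq_rpow]
    calc min ((16*Cb) ^ (-(1/4:ℝ))) 1 * (n:ℝ) ^ (min (b/4) (1/2))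
        ≤ 1 * (n:ℝ) ^ ((1:ℝ)/2) := by
          apply mul_le_mul (min_le_right _ _)
            (Real.rpow_le_rpow_of_exponent_le hnR (min_le_right _ _))
            (by positivity) (by norm_num)
      _ = (n:ℝ) ^ ((1:ℝ)/2) := one_mul _
  · -- κ > 0
    set σ : ℝ := if 0 ≤ ξ u then 1 else -1 with hσdef
    have hσsq : σ ^ 2 = 1 := by rcases ite_eq_or_eq (0 ≤ ξ u) (1:ℝ) (-1) with h | h <;>
      rw [hσdef, h] <;> norm_num
    have hσabs : |σ| = 1 := by rcases ite_eq_or_eq (0 ≤ ξ u) (1:ℝ) (-1) with h | h <;>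
      rw [hσdef, h] <;> norm_num
    set η : Fin n → ℝ := fun v => σ * ξ v with hηdef
    have habs : ∀ v, |η v| = |ξ v| := by
      intro v; rw [hηdef]; simp only [abs_mul, hσabs, one_mul]
    have heig' : (G.lapMatrix ℝ).mulVec η = κ • η := by
      have : η = σ • ξ := rfl
      rw [this, Matrix.mulVec_smul, heig, smul_comm]
    have hnorm' : ∑ v, η v ^ 2 = 1 := by
      rw [← hnorm]
      apply Finset.sum_congr rfl
      intro v _
      rw [hηdef, mul_pow, hσsq, one_mul]
    have hE2' : ∑ d : G.Dart, (η d.toProd.1 - η d.toProd.2) ^ 2 = 2 * κ := by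
      rw [← hE2]
      apply Finset.sum_congr rfl
      intro d _
      rw [hηdef]
      have : σ * ξ d.toProd.1 - σ * ξ d.toProd.2 = σ * (ξ d.toProd.1 - ξ d.toProd.2) := by ring
      rw [this, mul_pow, hσsq, one_mul]
    have hmaxη : ∀ v, |η v| ≤ |η u| := by
      intro v; rw [habs, habs]; exact hmax' v
    have huη : 0 ≤ η u := by
      have hη : η u = σ * ξ u := rfl
      rw [hη, hσdef]
      split_ifs with h
      · linarith
      · nlinarith
    have hkey := key_pos hG κ η heig' hnorm' hE2' u hmaxη huη hκpos
    have hsumeq : ∑ v, |η v| = ∑ v, |ξ v| := Finset.sum_congr rfl fun v _ => habs v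
    rw [hsumeq] at hkey
    refine le_trans ?_ hkey
    -- c * n^a ≤ (16κ)^{-1/4}
    have step1 : min ((16*Cb) ^ (-(1/4:ℝ))) 1 * (n:ℝ) ^ (min (b/4) (1/2))
        ≤ (16*Cb) ^ (-(1/4:ℝ)) * (n:ℝ) ^ (b/4) := by
      apply mul_le_mul (min_le_left _ _)
        (Real.rpow_le_rpow_of_exponent_le hnR (min_le_left _ _))
        (by positivity) (by positivity)
    refine step1.trans ?_
    set X : ℝ := (16*Cb) ^ (-(1/4:ℝ)) * (n:ℝ) ^ (b/4) with hXdef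
    set Y : ℝ := (16*κ) ^ (-(1/4:ℝ)) with hYdef
    have hX0 : 0 ≤ X := by positivity
    have hY0 : 0 ≤ Y := by rw [hYdef]; positivity
    apply le_of_pow_le_pow_left₀ (n := 4) (by norm_num) hY0
    have hX4 : X ^ (4:ℕ) = (16*Cb)⁻¹ * (n:ℝ) ^ b := by
      rw [hXdef, mul_pow, ← Real.rpow_natCast ((16*Cb) ^ (-(1/4:ℝ))) 4,
        ← Real.rpow_natCast ((n:ℝ) ^ (b/4)) 4,
        ← Real.rpow_mul (by positivity), ← Real.rpow_mul (by positivity)]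
      have e1 : (-(1/4:ℝ)) * ((4:ℕ):ℝ) = -1 := by push_cast; ring
      have e2 : (b/4) * ((4:ℕ):ℝ) = b := by push_cast; ring
      rw [e1, e2, Real.rpow_neg_one]
    have hY4 : Y ^ (4:ℕ) = (16*κ)⁻¹ := by
      rw [hYdef, ← Real.rpow_natCast ((16*κ) ^ (-(1/4:ℝ))) 4,
        ← Real.rpow_mul (by positivity)]
      have e1 : (-(1/4:ℝ)) * ((4:ℕ):ℝ) = -1 := by push_cast; ring
      rw [e1, Real.rpow_neg_one]
    rw [hX4, hY4]
    have hb0 : (0:ℝ) < (n:ℝ) ^ (-b) := Real.rpow_pos_of_pos hnpos _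
    have h16 : 0 < 16 * κ := by linarith
    have hle : 16 * κ ≤ 16 * Cb * (n:ℝ) ^ (-b) := by linarith
    have hnb : ((n:ℝ) ^ (-b))⁻¹ = (n:ℝ) ^ b := by
      rw [← Real.rpow_neg hnpos.le, neg_neg]
    have hthis := inv_anti₀ h16 hle
    rw [mul_inv, hnb] at hthis
    exact hthis
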